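/- arXiv:2103.07146 — 2 statements merged into one kernel-verified Lean document; each statement's English description precedes it below -/
import Mathlib

section
/- For every scalar x, the rank of S − x L satisfies rank(S − x L) ≤ 2(p + q) · rank(C), where C is the Cauchy matrix with entries 1/(μ_h − λ_k), L is the Loewner matrix and S is the shifted Loewner matrix built from the same data. -/
open Matrix


lemma my_rank_add_le {m n : ℕ} (A B : Matrix (Fin m) (Fin n) ℂ) :
    (A + B).rank ≤ A.rank + B.rank := by
  rw [Matrix.rank, Matrix.rank, Matrix.rank, Matrix.mulVecLin_add]
  refine le_trans (Submodule.finrank_mono ?_) (Submodule.finrank_add_le_finrank_add_finrank _ _)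
  rintro y ⟨v, rfl⟩
  exact Submodule.add_mem_sup ⟨v, rfl⟩ ⟨v, rfl⟩

lemma my_rank_sum_le {m n : ℕ} {ι : Type*} (s : Finset ι) (f : ι → Matrix (Fin m) (Fin n) ℂ) :
    (∑ i ∈ s, f i).rank ≤ ∑ i ∈ s, (f i).rank := by
  induction s using Finset.cons_induction with
  | empty => simp
  | cons a s ha ih =>
    rw [Finset.sum_cons, Finset.sum_cons]
    exact (my_rank_add_le _ _).trans (add_le_add le_rfl ih)

lemma had_mul_decomp {N m : ℕ} (C : Matrix (Fin N) (Fin N) ℂ)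
    (A : Matrix (Fin N) (Fin m) ℂ) (B : Matrix (Fin m) (Fin N) ℂ) :
    Matrix.hadamard C (A * B)
      = ∑ j : Fin m, Matrix.diagonal (fun h => A h j) * C * Matrix.diagonal (fun k => B j k) := by
  ext h k
  simp [Matrix.sum_apply, Matrix.hadamard_apply, Matrix.mul_apply, Matrix.diagonal,
    Finset.mul_sum, Finset.sum_mul, mul_comm, mul_left_comm]

lemma had_mul_rank {N m : ℕ} (C : Matrix (Fin N) (Fin N) ℂ)
    (A : Matrix (Fin N) (Fin m) ℂ) (B : Matrix (Fin m) (Fin N) ℂ) :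
    (Matrix.hadamard C (A * B)).rank ≤ m * C.rank := by
  rw [had_mul_decomp]
  refine (my_rank_sum_le _ _).trans ?_
  calc ∑ j : Fin m, (Matrix.diagonal (fun h => A h j) * C * Matrix.diagonal (fun k => B j k)).rank
      ≤ ∑ _j : Fin m, C.rank := by
        refine Finset.sum_le_sum fun j _ => ?_
        exact (Matrix.rank_mul_le_left _ _).trans (Matrix.rank_mul_le_right _ _)
    _ = m * C.rank := by simp [Finset.sum_const, Finset.card_univ]
/-- Rank bound: `rank(S − x L) ≤ 2 (p + q) · rank(C)` for every scalar `x`. -/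
theorem shifted_loewner_pencil_rank_bound {N p q : ℕ} (μ lam : Fin N → ℂ)
    (hsep : ∀ h k, μ h ≠ lam k)
    (V : Matrix (Fin N) (Fin q) ℂ) (R : Matrix (Fin q) (Fin N) ℂ)
    (Lmat : Matrix (Fin N) (Fin p) ℂ) (W : Matrix (Fin p) (Fin N) ℂ)
    (L S C : Matrix (Fin N) (Fin N) ℂ)
    (hL : L = Matrix.hadamard C (V * R - Lmat * W))
    (hS : S = Matrix.hadamard C
      (Matrix.diagonal μ * (V * R) - Lmat * W * Matrix.diagonal lam))
    (hC : ∀ h k, C h k = 1 / (μ h - lam k))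
    (x : ℂ) :
    (S - x • L).rank ≤ 2 * (p + q) * C.rank := by
  set A1 : Matrix (Fin N) (Fin q) ℂ := (Matrix.diagonal μ - x • 1) * V with hA1
  set A2 : Matrix (Fin N) (Fin p) ℂ := -Lmat with hA2
  set B2 : Matrix (Fin p) (Fin N) ℂ := W * (Matrix.diagonal lam - x • 1) with hB2
  have harg : A1 * R + A2 * B2
      = (Matrix.diagonal μ * (V * R) - Lmat * W * Matrix.diagonal lam)
        - x • (V * R - Lmat * W) := by
    simp only [hA1, hA2, hB2, Matrix.sub_mul, Matrix.mul_sub, Matrix.neg_mul,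
      Matrix.one_mul, Matrix.mul_one, Matrix.smul_mul, Matrix.mul_smul,
      Matrix.mul_assoc, smul_sub, neg_sub]
    module
  have key : S - x • L = Matrix.hadamard C (A1 * R) + Matrix.hadamard C (A2 * B2) := by
    subst hL hS
    ext h k
    have := congrArg (fun M : Matrix (Fin N) (Fin N) ℂ => M h k) harg
    simp only [Matrix.add_apply, Matrix.sub_apply, Matrix.smul_apply, smul_eq_mul] at this ⊢
    simp only [Matrix.hadamard_apply, Matrix.sub_apply, Matrix.smul_apply, smul_eq_mul]
    rw [show C h k * (A1 * R) h k + C h k * (A2 * B2) h k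
        = C h k * ((A1 * R) h k + (A2 * B2) h k) by ring, this]
    ring
  rw [key]
  calc (Matrix.hadamard C (A1 * R) + Matrix.hadamard C (A2 * B2)).rank
      ≤ (Matrix.hadamard C (A1 * R)).rank + (Matrix.hadamard C (A2 * B2)).rank :=
        my_rank_add_le _ _
    _ ≤ q * C.rank + p * C.rank := add_le_add (had_mul_rank _ _ _) (had_mul_rank _ _ _)
    _ ≤ 2 * (p + q) * C.rank := by nlinarith [Nat.zero_le C.rank]
end

section
/- The spectral norm is submultiplicative with respect to the Hadamard product: for all A, B ∈ C^{N×N}, ‖A ∘ B‖₂ ≤ ‖A‖₂ · ‖B‖₂, where ‖·‖₂ denotes the operator norm induced by the Euclidean vector norm. -/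
open Matrix

set_option maxHeartbeats 1000000
set_option synthInstance.maxHeartbeats 1000000

/-- The spectral norm (operator norm induced by the Euclidean vector norm)
of a square complex matrix. -/
noncomputable def specNorm {N : ℕ} (A : Matrix (Fin N) (Fin N) ℂ) : ℝ :=
  ‖Matrix.toEuclideanCLM (𝕜 := ℂ) A‖

lemma specNorm_nonneg {N : ℕ} (A : Matrix (Fin N) (Fin N) ℂ) : 0 ≤ specNorm A :=
  norm_nonneg _

lemma specNorm_conjTranspose {N : ℕ} (A : Matrix (Fin N) (Fin N) ℂ) :
    specNorm Aᴴ = specNorm A := by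
  simp only [specNorm, ← Matrix.star_eq_conjTranspose, map_star,
    ContinuousLinearMap.star_eq_adjoint, LinearIsometryEquiv.norm_map]

lemma toEuclideanCLM_apply' {N : ℕ} (M : Matrix (Fin N) (Fin N) ℂ)
    (x : EuclideanSpace ℂ (Fin N)) (i : Fin N) :
    (Matrix.toEuclideanCLM (𝕜 := ℂ) M x) i = ∑ j, M i j * x j := rfl

/-- Column norm bound: the squared ℓ² norm of any column is at most `specNorm A ^ 2`. -/
lemma col_sq_le {N : ℕ} (A : Matrix (Fin N) (Fin N) ℂ) (j : Fin N) :
    ∑ i, ‖A i j‖ ^ 2 ≤ specNorm A ^ 2 := by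
  set e : EuclideanSpace ℂ (Fin N) := EuclideanSpace.single j (1 : ℂ)
  have h1 : ‖Matrix.toEuclideanCLM (𝕜 := ℂ) A e‖ ≤ specNorm A := by
    calc ‖Matrix.toEuclideanCLM (𝕜 := ℂ) A e‖ ≤ specNorm A * ‖e‖ :=
          (Matrix.toEuclideanCLM (𝕜 := ℂ) A).le_opNorm e
      _ = specNorm A := by simp [e, EuclideanSpace.norm_single]
  have h2 : ∀ i, (Matrix.toEuclideanCLM (𝕜 := ℂ) A e) i = A i j := by
    intro i
    rw [toEuclideanCLM_apply']
    simp [e, EuclideanSpace.single_apply]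
  calc ∑ i, ‖A i j‖ ^ 2 = ‖Matrix.toEuclideanCLM (𝕜 := ℂ) A e‖ ^ 2 := by
        rw [EuclideanSpace.norm_eq, Real.sq_sqrt (by positivity)]
        simp_rw [h2]
    _ ≤ specNorm A ^ 2 := by
        have := norm_nonneg (Matrix.toEuclideanCLM (𝕜 := ℂ) A e)
        nlinarith
/-- Row norm bound. -/
lemma row_sq_le {N : ℕ} (B : Matrix (Fin N) (Fin N) ℂ) (i : Fin N) :
    ∑ j, ‖B i j‖ ^ 2 ≤ specNorm B ^ 2 := by
  have := col_sq_le Bᴴ i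
  rw [specNorm_conjTranspose] at this
  simpa [Matrix.conjTranspose_apply] using this

/-- Submultiplicativity of the spectral norm w.r.t. the Hadamard product:
`‖A ∘ B‖₂ ≤ ‖A‖₂ ‖B‖₂`. -/
theorem specNorm_hadamard_le {N : ℕ} (A B : Matrix (Fin N) (Fin N) ℂ) :
    specNorm (Matrix.hadamard A B) ≤ specNorm A * specNorm B := by
  set a := specNorm A with ha
  set b := specNorm B with hb
  have ha0 : 0 ≤ a := specNorm_nonneg A
  have hb0 : 0 ≤ b := specNorm_nonneg B
  refine ContinuousLinearMap.opNorm_le_bound _ (mul_nonneg ha0 hb0) fun x => ?_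
  set T := Matrix.toEuclideanCLM (𝕜 := ℂ) (Matrix.hadamard A B)
  set y := T x with hy
  -- key pointwise Cauchy–Schwarz estimate
  have key : ‖y‖ ^ 2 ≤ a * b * ‖x‖ * ‖y‖ := by
    have hinner : (‖y‖ : ℝ) ^ 2 = RCLike.re (inner (𝕜 := ℂ) y y) := by
      rw [← inner_self_eq_norm_sq (𝕜 := ℂ)]
    have hexp : inner (𝕜 := ℂ) y (T x) = ∑ i, ∑ j,
        (starRingEnd ℂ) (y i) * (A i j * B i j * x j) := by
      rw [PiLp.inner_apply]
      refine Finset.sum_congr rfl fun i _ => ?_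
      rw [toEuclideanCLM_apply', RCLike.inner_apply, mul_comm _ ((starRingEnd ℂ) _), Finset.mul_sum]
      simp [Matrix.hadamard]
    -- bound the norm of the inner product
    have hbound : ‖inner (𝕜 := ℂ) y y‖ ≤ a * b * ‖x‖ * ‖y‖ := by
      have hnx : ‖x‖ ^ 2 = ∑ j, ‖x j‖ ^ 2 := by
        rw [EuclideanSpace.norm_eq, Real.sq_sqrt (by positivity)]
      have hny : ‖y‖ ^ 2 = ∑ i, ‖y i‖ ^ 2 := by
        rw [EuclideanSpace.norm_eq, Real.sq_sqrt (by positivity)]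
      have h1 : ‖inner (𝕜 := ℂ) y y‖ ≤
          ∑ i, ∑ j, (‖A i j‖ * ‖x j‖) * (‖B i j‖ * ‖y i‖) := by
        rw [hexp]
        refine (norm_sum_le _ _).trans (Finset.sum_le_sum fun i _ =>
          (norm_sum_le _ _).trans (le_of_eq (Finset.sum_congr rfl fun j _ => ?_)))
        simp only [norm_mul, RCLike.norm_conj]
        ring
      have hx2 : ∑ i, ∑ j, (‖A i j‖ * ‖x j‖) ^ 2 ≤ a ^ 2 * ‖x‖ ^ 2 := by
        rw [Finset.sum_comm, hnx, Finset.mul_sum]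
        refine Finset.sum_le_sum fun j _ => ?_
        simp_rw [mul_pow, ← Finset.sum_mul]
        have := col_sq_le A j
        nlinarith [sq_nonneg (‖x j‖), Finset.sum_nonneg
          (fun i (_ : i ∈ Finset.univ) => sq_nonneg (‖A i j‖))]
      have hy2 : ∑ i, ∑ j, (‖B i j‖ * ‖y i‖) ^ 2 ≤ b ^ 2 * ‖y‖ ^ 2 := by
        rw [hny, Finset.mul_sum]
        refine Finset.sum_le_sum fun i _ => ?_
        simp_rw [mul_pow, ← Finset.sum_mul]
        have := row_sq_le B i
        nlinarith [sq_nonneg (‖y i‖), Finset.sum_nonneg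
          (fun j (_ : j ∈ Finset.univ) => sq_nonneg (‖B i j‖))]
      -- Cauchy-Schwarz on the product index set
      have hCS : (∑ p ∈ Finset.univ ×ˢ Finset.univ,
            (‖A p.1 p.2‖ * ‖x p.2‖) * (‖B p.1 p.2‖ * ‖y p.1‖)) ^ 2 ≤
          (a ^ 2 * ‖x‖ ^ 2) * (b ^ 2 * ‖y‖ ^ 2) := by
        refine (Finset.sum_mul_sq_le_sq_mul_sq _ _ _).trans ?_
        rw [Finset.sum_product, Finset.sum_product]
        exact mul_le_mul hx2 hy2 (Finset.sum_nonneg fun i _ =>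
          Finset.sum_nonneg fun j _ => sq_nonneg _) (by positivity)
      have hprod : ∑ p ∈ Finset.univ ×ˢ Finset.univ,
          (‖A p.1 p.2‖ * ‖x p.2‖) * (‖B p.1 p.2‖ * ‖y p.1‖) =
          ∑ i, ∑ j, (‖A i j‖ * ‖x j‖) * (‖B i j‖ * ‖y i‖) :=
        Finset.sum_product _ _ _
      rw [hprod] at hCS
      have hsum_nonneg : 0 ≤ ∑ i, ∑ j, (‖A i j‖ * ‖x j‖) * (‖B i j‖ * ‖y i‖) :=
        Finset.sum_nonneg fun i _ => Finset.sum_nonneg fun j _ => by positivity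
      have hfin : ∑ i, ∑ j, (‖A i j‖ * ‖x j‖) * (‖B i j‖ * ‖y i‖) ≤
          a * b * ‖x‖ * ‖y‖ := by
        have hrhs : (a * b * ‖x‖ * ‖y‖) ^ 2 = (a ^ 2 * ‖x‖ ^ 2) * (b ^ 2 * ‖y‖ ^ 2) := by ring
        have h0 : (0:ℝ) ≤ a * b * ‖x‖ * ‖y‖ := by positivity
        nlinarith
      exact h1.trans hfin
    calc ‖y‖ ^ 2 = RCLike.re (inner (𝕜 := ℂ) y y) := hinner
      _ ≤ ‖inner (𝕜 := ℂ) y y‖ := RCLike.re_le_norm _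
      _ ≤ a * b * ‖x‖ * ‖y‖ := hbound
  rcases eq_or_lt_of_le (norm_nonneg y) with h0 | h0
  · show ‖y‖ ≤ _
    rw [← h0]; positivity
  · exact le_of_mul_le_mul_right (by nlinarith : ‖y‖ * ‖y‖ ≤ (a * b * ‖x‖) * ‖y‖) h0
end
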